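/- In a minimum-length covering strategy for a tree, if some robot traverses an edge exactly twice, then no other robot traverses that edge. -/

import Mathlib

open Finset

variable {V : Type*}

/-- The list of consecutive steps of a walk given as a list of vertices. -/
def wsteps (W : List V) : List (V × V) := W.zip W.tail

/-- A walk on a graph: a nonempty list of vertices in which consecutive
entries are equal or adjacent. -/
def IsWalk (G : SimpleGraph V) (W : List V) : Prop :=
  W ≠ [] ∧ ∀ p ∈ wsteps W, p.1 = p.2 ∨ G.Adj p.1 p.2

/-- The length of a walk: the number of position-changing moves. -/
def wlen [DecidableEq V] (W : List V) : ℕ :=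
  (wsteps W).countP (fun p => decide (p.1 ≠ p.2))

/-- The number of times a walk traverses the edge `{x, y}` (in either direction). -/
def trav [DecidableEq V] (W : List V) (x y : V) : ℕ :=
  (wsteps W).countP (fun p => decide ((p.1 = x ∧ p.2 = y) ∨ (p.1 = y ∧ p.2 = x)))

/-- The number of times a walk traverses the edge `(x, y)` from `x` to `y`. -/
def dirTrav [DecidableEq V] (W : List V) (x y : V) : ℕ :=
  (wsteps W).countP (fun p => decide (p.1 = x ∧ p.2 = y))

/-- A tuple of walks covers the graph: every vertex appears in some walk. -/
def Covers {k : ℕ} (S : Fin k → List V) : Prop := ∀ v : V, ∃ i, v ∈ S i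

/-- The total length of a strategy: the sum of the lengths of the walks. -/
def slen [DecidableEq V] {k : ℕ} (S : Fin k → List V) : ℕ := ∑ i, wlen (S i)

/-- A minimum-length covering strategy: a tuple of walks covering all vertices whose
total length is no larger than that of any covering strategy with the same starts. -/
def IsMinCover [DecidableEq V] (G : SimpleGraph V) {k : ℕ} (S : Fin k → List V) : Prop :=
  (∀ i, IsWalk G (S i)) ∧ Covers S ∧
    ∀ S' : Fin k → List V, (∀ i, IsWalk G (S' i)) → Covers S' →
      (∀ i, (S' i).head? = (S i).head?) → slen S ≤ slen S'

lemma wsteps_cons_cons (a b : V) (l : List V) :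
    wsteps (a :: b :: l) = (a, b) :: wsteps (b :: l) := rfl

lemma wsteps_append (A : List V) (u : V) (B : List V) :
    wsteps (A ++ u :: B) = wsteps (A ++ [u]) ++ wsteps (u :: B) := by
  induction A with
  | nil => simp [wsteps]
  | cons a A ih =>
    cases A with
    | nil => simp [wsteps, List.zip]
    | cons b A' =>
      simp only [List.cons_append, wsteps_cons_cons]
      rw [List.cons_append] at ih
      rw [ih]
      rfl

lemma split_first (c : V × V → Bool) :
    ∀ (W : List V), 0 < (wsteps W).countP c →
    ∃ A u v B, W = A ++ u :: v :: B ∧ c (u, v) = true ∧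
      (wsteps (A ++ [u])).countP c = 0 ∧
      (wsteps (v :: B)).countP c + 1 = (wsteps W).countP c
  | [], h => by simp [wsteps] at h
  | [a], h => by simp [wsteps] at h
  | a :: b :: W, h => by
    by_cases hc : c (a, b) = true
    · exact ⟨[], a, b, W, rfl, hc, by simp [wsteps],
        by simp [wsteps_cons_cons, List.countP_cons, hc]⟩
    · rw [wsteps_cons_cons, List.countP_cons, if_neg hc] at h
      simp only [Nat.add_zero] at h
      obtain ⟨A, u, v, B, hW, hcu, h0, h1⟩ := split_first c (b :: W) h
      refine ⟨a :: A, u, v, B, by rw [List.cons_append, ← hW], hcu, ?_, ?_⟩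
      · cases A with
        | nil =>
          have hb : b = u := by simpa using congrArg (·.head?) hW
          subst hb
          simp [wsteps, hc]
        | cons b' A' =>
          have hb : b = b' := by simpa using congrArg (·.head?) hW
          subst hb
          simp only [List.cons_append, wsteps_cons_cons, List.countP_cons, if_neg hc]
          rw [List.cons_append] at h0
          omega
      · rw [wsteps_cons_cons, List.countP_cons, if_neg hc]
        omega

lemma head?_append_cons (A : List V) (a : V) (l l' : List V) :
    (A ++ a :: l).head? = (A ++ a :: l').head? := by cases A <;> simp

lemma stay (G : SimpleGraph V) (x y : V) :
    ∀ (M : List V) (z : V),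
      (∀ p ∈ wsteps (z :: M), p.1 = p.2 ∨ G.Adj p.1 p.2) →
      (∀ p ∈ wsteps (z :: M), ¬((p.1 = x ∧ p.2 = y) ∨ (p.1 = y ∧ p.2 = x))) →
      ∀ v ∈ z :: M, (G.deleteEdges {s(x, y)}).Reachable z v
  | [], z, _, _ => by
    intro v hv
    simp only [List.mem_singleton] at hv
    subst hv
    exact SimpleGraph.Reachable.refl _
  | w :: M, z, hadj, hcr => by
    have hmem : (z, w) ∈ wsteps (z :: w :: M) := by
      rw [wsteps_cons_cons]; exact List.mem_cons_self
    have hzw : (G.deleteEdges {s(x, y)}).Reachable z w := by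
      rcases hadj _ hmem with h | h
      · simp only at h; subst h; exact SimpleGraph.Reachable.refl _
      · refine SimpleGraph.Adj.reachable ?_
        rw [SimpleGraph.deleteEdges_adj]
        refine ⟨h, ?_⟩
        intro hs
        apply hcr _ hmem
        simp only [Set.mem_singleton_iff, Sym2.eq_iff] at hs
        simpa using hs
    have ih := stay G x y M w
      (fun p hp => hadj p (by rw [wsteps_cons_cons]; exact List.mem_cons_of_mem _ hp))
      (fun p hp => hcr p (by rw [wsteps_cons_cons]; exact List.mem_cons_of_mem _ hp))
    intro v hv
    rcases List.mem_cons.mp hv with rfl | hv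
    · exact SimpleGraph.Reachable.refl _
    · exact hzw.trans (ih v hv)

lemma key {V : Type*} [Fintype V] [DecidableEq V] (G : SimpleGraph V) (hT : G.IsTree)
    {k : ℕ} (S : Fin k → List V) (hS : IsMinCover G S)
    (i : Fin k) (x y : V) (hxy : G.Adj x y)
    (j : Fin k) (hj : j ≠ i)
    (P Q₁ : List V) (hSi : S i = P ++ x :: y :: Q₁)
    (h1 : (wsteps (y :: Q₁)).countP
        (fun p => decide ((p.1 = x ∧ p.2 = y) ∨ (p.1 = y ∧ p.2 = x))) = 1)
    (hjt : trav (S j) x y ≠ 0) : False := by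
  classical
  set c : V × V → Bool :=
    fun p => decide ((p.1 = x ∧ p.2 = y) ∨ (p.1 = y ∧ p.2 = x)) with hc_def
  have hbr : ¬ (G.deleteEdges {s(x, y)}).Reachable x y := by
    have hb := (SimpleGraph.isAcyclic_iff_forall_adj_isBridge.mp hT.2) hxy
    rw [SimpleGraph.isBridge_iff] at hb
    exact hb
  have hWi := (hS.1 i).2
  have hWj := (hS.1 j).2
  have h1pos : 0 < (wsteps (y :: Q₁)).countP c := by rw [h1]; norm_num
  obtain ⟨P₂, u₂, v₂, Q₂, hd, hc2, h0, _⟩ := split_first c (y :: Q₁) h1pos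
  have e1 : wsteps (S i) =
      wsteps (P ++ [x]) ++
        ((x, y) :: (wsteps (P₂ ++ [u₂]) ++ ((u₂, v₂) :: wsteps (v₂ :: Q₂)))) := by
    rw [hSi, wsteps_append P x (y :: Q₁), wsteps_cons_cons, hd,
        wsteps_append P₂ u₂ (v₂ :: Q₂), wsteps_cons_cons]
  have hmidmem : ∀ p ∈ wsteps (P₂ ++ [u₂]), p ∈ wsteps (S i) := by
    intro p hp
    rw [e1]
    simp only [List.mem_append, List.mem_cons]
    tauto
  obtain ⟨T, hT'⟩ : ∃ T, P₂ ++ [u₂] = y :: T := by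
    cases P₂ with
    | nil =>
      have h : y = u₂ := by simpa using congrArg (·.head?) hd
      exact ⟨[], by simp [← h]⟩
    | cons p0 P₂' =>
      have h : y = p0 := by simpa using congrArg (·.head?) hd
      exact ⟨P₂' ++ [u₂], by simp [← h]⟩
  have hreach : ∀ v ∈ P₂ ++ [u₂], (G.deleteEdges {s(x, y)}).Reachable y v := by
    rw [hT']
    intro v hv
    refine stay G x y T y ?_ ?_ v hv
    · intro p hp; exact hWi p (hmidmem p (by rwa [hT']))
    · intro p hp
      have h0' := List.countP_eq_zero.mp h0 p (by rwa [hT'])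
      simpa [hc_def] using h0'
  have hu₂ : u₂ = y ∧ v₂ = x := by
    have hr := hreach u₂ (by simp)
    have hcp : (u₂ = x ∧ v₂ = y) ∨ (u₂ = y ∧ v₂ = x) := by
      simpa [hc_def] using hc2
    rcases hcp with ⟨h₁, h₂⟩ | h
    · rw [h₁] at hr
      exact absurd hr.symm hbr
    · exact h
  obtain ⟨h₁, h₂⟩ := hu₂
  rw [h₁] at hT'
  rw [h₁, h₂] at hd
  have hM : P₂ ++ [y] ++ x :: Q₂ = y :: Q₁ := by rw [hd]; simp
  have hSi2 : S i = P ++ x :: (P₂ ++ [y] ++ x :: Q₂) := by rw [hSi, hM]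
  -- robot j decomposition
  have hjt' : (wsteps (S j)).countP c ≠ 0 := hjt
  obtain ⟨A, u₃, v₃, B, hdj, hc3, _, _⟩ := split_first c (S j) (Nat.pos_of_ne_zero hjt')
  obtain ⟨C, D, hSj⟩ : ∃ C D, S j = C ++ y :: D := by
    have hcp : (u₃ = x ∧ v₃ = y) ∨ (u₃ = y ∧ v₃ = x) := by simpa [hc_def] using hc3
    rcases hcp with ⟨h₃, h₄⟩ | ⟨h₃, h₄⟩
    · exact ⟨A ++ [x], B, by rw [hdj, h₃, h₄]; simp⟩
    · exact ⟨A, x :: B, by rw [hdj, h₃, h₄]⟩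
  set Wi' : List V := P ++ x :: Q₂ with hWi'_def
  set Wj' : List V := C ++ (P₂ ++ [y] ++ y :: D) with hWj'_def
  set S' : Fin k → List V := Function.update (Function.update S i Wi') j Wj' with hS'_def
  have hS'j : S' j = Wj' := Function.update_self _ _ _
  have hS'i : S' i = Wi' := by
    rw [hS'_def, Function.update_of_ne (Ne.symm hj), Function.update_self]
  have hS't : ∀ t, t ≠ i → t ≠ j → S' t = S t := fun t hti htj => by
    rw [hS'_def, Function.update_of_ne htj, Function.update_of_ne hti]
  -- wsteps computations
  have step1 : wsteps (x :: (P₂ ++ [y] ++ x :: Q₂)) =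
      (x, y) :: wsteps (P₂ ++ [y] ++ x :: Q₂) := by
    rw [hT']; rfl
  have step2 : wsteps (P₂ ++ [y] ++ x :: Q₂) =
      wsteps (P₂ ++ [y]) ++ ((y, x) :: wsteps (x :: Q₂)) := by
    have h : (P₂ ++ [y] ++ x :: Q₂ : List V) = P₂ ++ y :: x :: Q₂ := by simp
    rw [h, wsteps_append P₂ y (x :: Q₂), wsteps_cons_cons]
  have eqi_old : wsteps (S i) =
      wsteps (P ++ [x]) ++
        ((x, y) :: (wsteps (P₂ ++ [y]) ++ ((y, x) :: wsteps (x :: Q₂)))) := by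
    rw [hSi2, wsteps_append P x (P₂ ++ [y] ++ x :: Q₂), step1, step2]
  have eqi_new : wsteps Wi' = wsteps (P ++ [x]) ++ wsteps (x :: Q₂) :=
    wsteps_append P x Q₂
  have eqj_old : wsteps (S j) = wsteps (C ++ [y]) ++ wsteps (y :: D) := by
    rw [hSj]; exact wsteps_append C y D
  have stepj1 : wsteps (C ++ (P₂ ++ [y] ++ y :: D)) =
      wsteps (C ++ [y]) ++ wsteps (P₂ ++ [y] ++ y :: D) := by
    rw [hT']
    exact wsteps_append C y (T ++ y :: D)
  have stepj2 : wsteps (P₂ ++ [y] ++ y :: D) =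
      wsteps (P₂ ++ [y]) ++ ((y, y) :: wsteps (y :: D)) := by
    have h : (P₂ ++ [y] ++ y :: D : List V) = P₂ ++ y :: y :: D := by simp
    rw [h, wsteps_append P₂ y (y :: D), wsteps_cons_cons]
  have eqj_new : wsteps Wj' =
      wsteps (C ++ [y]) ++ (wsteps (P₂ ++ [y]) ++ ((y, y) :: wsteps (y :: D))) := by
    rw [hWj'_def, stepj1, stepj2]
  -- validity
  have hvalid : ∀ t, IsWalk G (S' t) := by
    intro t
    by_cases hti : t = i
    · subst hti
      rw [hS'i]
      refine ⟨by simp [hWi'_def], ?_⟩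
      intro p hp
      rw [eqi_new] at hp
      apply hWi p
      rw [eqi_old]
      simp only [List.mem_append, List.mem_cons] at hp ⊢
      tauto
    · by_cases htj : t = j
      · subst htj
        rw [hS'j]
        refine ⟨by simp [hWj'_def], ?_⟩
        intro p hp
        rw [eqj_new] at hp
        simp only [List.mem_append, List.mem_cons] at hp
        rcases hp with h | h | h | h
        · exact hWj p (by rw [eqj_old]; exact List.mem_append.mpr (Or.inl h))
        · refine hWi p ?_
          rw [eqi_old]
          simp only [List.mem_append, List.mem_cons]
          tauto
        · subst h; exact Or.inl rfl
        · exact hWj p (by rw [eqj_old]; exact List.mem_append.mpr (Or.inr h))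
      · rw [hS't t hti htj]; exact hS.1 t
  -- coverage
  have hcov : Covers S' := by
    intro v
    obtain ⟨t, hv⟩ := hS.2.1 v
    by_cases hti : t = i
    · rw [hti, hSi2] at hv
      by_cases hvm : v ∈ P₂ ++ [y]
      · refine ⟨j, ?_⟩
        rw [hS'j, hWj'_def]
        simp only [List.mem_append] at hvm ⊢
        tauto
      · refine ⟨i, ?_⟩
        rw [hS'i, hWi'_def]
        simp only [List.mem_append, List.mem_cons, List.mem_singleton] at hv hvm ⊢
        tauto
    · by_cases htj : t = j
      · rw [htj, hSj] at hv
        refine ⟨j, ?_⟩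
        rw [hS'j, hWj'_def]
        simp only [List.mem_append, List.mem_cons, List.mem_singleton] at hv ⊢
        tauto
      · exact ⟨t, by rw [hS't t hti htj]; exact hv⟩
  -- heads
  have hheads : ∀ t, (S' t).head? = (S t).head? := by
    intro t
    by_cases hti : t = i
    · subst hti
      rw [hS'i, hWi'_def, hSi2]
      exact head?_append_cons P x Q₂ _
    · by_cases htj : t = j
      · subst htj
        rw [hS'j, hWj'_def, hSj, hT']
        exact head?_append_cons C y (T ++ y :: D) D
      · rw [hS't t hti htj]
  -- lengths
  have hxne : x ≠ y := G.ne_of_adj hxy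
  have sums : wlen Wi' + wlen Wj' + 2 = wlen (S i) + wlen (S j) := by
    unfold wlen
    rw [eqi_old, eqi_new, eqj_old, eqj_new]
    simp only [List.countP_append, List.countP_cons]
    simp [hxne, Ne.symm hxne]
    omega
  have key2 : slen S' + 2 = slen S := by
    have hsum : ∀ f : Fin k → ℕ, ∑ t, f t = f i + f j + ∑ t ∈ univ \ {i, j}, f t := by
      intro f
      have h : ∑ t ∈ univ \ ({i, j} : Finset (Fin k)), f t + ∑ t ∈ ({i, j} : Finset (Fin k)), f t = ∑ t, f t :=
        Finset.sum_sdiff (Finset.subset_univ _)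
      rw [Finset.sum_pair (Ne.symm hj)] at h
      omega
    have hrest : ∑ t ∈ univ \ ({i, j} : Finset (Fin k)), wlen (S' t)
        = ∑ t ∈ univ \ ({i, j} : Finset (Fin k)), wlen (S t) := by
      refine Finset.sum_congr rfl (fun t ht => ?_)
      simp only [Finset.mem_sdiff, Finset.mem_insert, Finset.mem_singleton] at ht
      push_neg at ht
      rw [hS't t ht.2.1 ht.2.2]
    unfold slen
    rw [hsum (fun t => wlen (S t)), hsum (fun t => wlen (S' t)), hrest, hS'i, hS'j]
    omega
  have hle := hS.2.2 S' hvalid hcov hheads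
  omega

lemma trav_comm [DecidableEq V] (W : List V) (x y : V) : trav W x y = trav W y x := by
  unfold trav
  congr 1
  funext p
  exact decide_eq_decide.mpr or_comm

/-- In a minimum-length covering strategy for a tree, if some robot traverses
an edge exactly twice, then no other robot traverses that edge. -/
theorem stmt2 {V : Type*} [Fintype V] [DecidableEq V] (G : SimpleGraph V) (hT : G.IsTree)
    {k : ℕ} (S : Fin k → List V) (hS : IsMinCover G S)
    (i : Fin k) (x y : V) (hxy : G.Adj x y) (h2 : trav (S i) x y = 2) :
    ∀ j : Fin k, j ≠ i → trav (S j) x y = 0 := by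
  intro j hj
  by_contra hne
  have h2'' : (wsteps (S i)).countP
      (fun p => decide ((p.1 = x ∧ p.2 = y) ∨ (p.1 = y ∧ p.2 = x))) = 2 := h2
  have h2' : 0 < (wsteps (S i)).countP
      (fun p => decide ((p.1 = x ∧ p.2 = y) ∨ (p.1 = y ∧ p.2 = x))) := by omega
  obtain ⟨P, u, v, Q₁, hd, hc, h0, h1⟩ := split_first _ (S i) h2'
  have hcp : (u = x ∧ v = y) ∨ (u = y ∧ v = x) := by simpa using hc
  rcases hcp with ⟨h₃, h₄⟩ | ⟨h₃, h₄⟩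
  · rw [h₃, h₄] at hd
    rw [h₄] at h1
    exact key G hT S hS i x y hxy j hj P Q₁ hd (by omega) hne
  · rw [h₃, h₄] at hd
    rw [h₄] at h1
    have hpred : (fun p : V × V => decide ((p.1 = y ∧ p.2 = x) ∨ (p.1 = x ∧ p.2 = y)))
        = (fun p : V × V => decide ((p.1 = x ∧ p.2 = y) ∨ (p.1 = y ∧ p.2 = x))) := by
      funext p
      exact decide_eq_decide.mpr or_comm
    refine key G hT S hS i y x hxy.symm j hj P Q₁ hd ?_ ?_
    · rw [hpred]; omega
    · have hcomm := trav_comm (S j) x y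
      omega
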